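/- In a pointed protomodular finitely complete category, if the normalisation c ∘ k of a reflexive graph (d, c : C₁ → C₀, e) is a monomorphism (k being a kernel of d), then d and c are jointly monic, i.e. the reflexive graph is a reflexive relation. -/

import Mathlib

open CategoryTheory CategoryTheory.Limits

/-- In a pointed protomodular finitely complete category (protomodularity
encoded by the fact that a morphism whose kernel is zero is a monomorphism), if the
normalisation `c ∘ k` of a reflexive graph `(d, c : C₁ ⟶ C₀, e)` is a monomorphism
(`k` being a kernel of `d`), then `d` and `c` are jointly monic, i.e. the reflexive
graph is a reflexive relation. -/
theorem reflexive_relation_of_normalisation_mono {C : Type*} [Category C]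
    [HasZeroMorphisms C] [HasFiniteLimits C]
    (hproto : ∀ {P Q : C} (f : P ⟶ Q), IsZero (kernel f) → Mono f)
    {C₁ C₀ : C} (d c : C₁ ⟶ C₀) (e : C₀ ⟶ C₁)
    (hde : e ≫ d = 𝟙 C₀) (hce : e ≫ c = 𝟙 C₀)
    (hmono : Mono (kernel.ι d ≫ c)) :
    Mono (prod.lift d c) := by
  apply hproto
  rw [IsZero.iff_id_eq_zero]
  set ι := kernel.ι (prod.lift d c) with hι
  have h1 : ι ≫ d = 0 := by
    have h := kernel.condition (prod.lift d c)
    have h' := congrArg (· ≫ prod.fst) h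
    have h'' := h'.trans zero_comp
    rwa [Category.assoc, prod.lift_fst] at h''
  have h2 : ι ≫ c = 0 := by
    have h := kernel.condition (prod.lift d c)
    have h' := congrArg (· ≫ prod.snd) h
    have h'' := h'.trans zero_comp
    rwa [Category.assoc, prod.lift_snd] at h''
  set u := kernel.lift d ι h1 with hu
  have hfac : u ≫ kernel.ι d = ι := kernel.lift_ι _ _ _
  have hu0 : u = 0 := by
    have : u ≫ (kernel.ι d ≫ c) = 0 ≫ (kernel.ι d ≫ c) := by
      rw [← Category.assoc, hfac, h2, zero_comp]
    exact (cancel_mono _).mp this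
  have hι0 : ι = 0 := by rw [← hfac, hu0, zero_comp]
  have : 𝟙 (kernel (prod.lift d c)) ≫ ι = 0 ≫ ι := by
    rw [Category.id_comp, hι0, zero_comp]
  exact (cancel_mono ι).mp this
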